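/- Let (s_k) be a real sequence that is slowly decreasing with respect to (L,1) summability: for every ε > 0 there exist n₀ ∈ ℕ and λ > 1 such that s_k − s_n ≥ −ε whenever n₀ ≤ n < k ≤ n^λ. If (1/ℓ_n) Σ_{k=1}^n s_k/k → A as n → ∞, where ℓ_n := Σ_{k=1}^n 1/k, then s_n → A. -/

import Mathlib

open Filter

private lemma ell_eq_harmonic (n : ℕ) :
    (∑ k ∈ Finset.Icc 1 n, (1:ℝ)/k) = (harmonic n : ℝ) := by
  rw [harmonic_eq_sum_Icc]
  push_cast
  simp [one_div]

private lemma ell_lower (n : ℕ) : Real.log n ≤ ∑ k ∈ Finset.Icc 1 n, (1:ℝ)/k := by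
  rw [ell_eq_harmonic]
  refine le_trans ?_ (log_add_one_le_harmonic n)
  rcases Nat.eq_zero_or_pos n with h | h
  · simp [h]
  · apply Real.log_le_log (by exact_mod_cast h)
    exact_mod_cast Nat.le_succ n

private lemma ell_upper (n : ℕ) : (∑ k ∈ Finset.Icc 1 n, (1:ℝ)/k) ≤ 1 + Real.log n := by
  rw [ell_eq_harmonic]; exact harmonic_le_one_add_log n

private lemma ell_pos {n : ℕ} (hn : 1 ≤ n) : 0 < ∑ k ∈ Finset.Icc 1 n, (1:ℝ)/k := by
  rw [ell_eq_harmonic]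
  exact_mod_cast harmonic_pos (Nat.one_le_iff_ne_zero.mp hn)

private lemma sum_split {n m : ℕ} (h : n ≤ m) (f : ℕ → ℝ) :
    ∑ k ∈ Finset.Ioc n m, f k
      = (∑ k ∈ Finset.Icc 1 m, f k) - ∑ k ∈ Finset.Icc 1 n, f k := by
  have h1 : ∀ j : ℕ, Finset.Icc 1 j = Finset.Ioc 0 j := by
    intro j
    rw [show (1:ℕ) = 0 + 1 from rfl, Finset.Icc_add_one_left_eq_Ioc]
  rw [h1, h1]
  have := Finset.sum_Ioc_consecutive f (Nat.zero_le n) h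
  linarith

private lemma eventually_mul_log {a b : ℝ} (ha : 0 < a) :
    ∀ᶠ n : ℕ in atTop, b ≤ a * Real.log n := by
  have hlog : Tendsto (fun n : ℕ => Real.log n) atTop atTop :=
    Real.tendsto_log_atTop.comp tendsto_natCast_atTop_atTop
  filter_upwards [hlog.eventually_ge_atTop (b / a)] with n hn
  rw [div_le_iff₀ ha] at hn
  linarith [hn]

set_option maxHeartbeats 1000000 in
theorem corollary3
    (s : ℕ → ℝ) (A : ℝ)
    (hsd : ∀ ε > (0:ℝ), ∃ n₀ : ℕ, ∃ l > (1:ℝ),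
      ∀ n k : ℕ, n₀ ≤ n → n < k → (k : ℝ) ≤ (n : ℝ) ^ l → s k - s n ≥ -ε)
    (hL1 : Tendsto (fun n : ℕ =>
        (∑ k ∈ Finset.Icc 1 n, (1:ℝ) / k)⁻¹ * ∑ k ∈ Finset.Icc 1 n, s k / k)
      atTop (nhds A)) :
    Tendsto s atTop (nhds A) := by
  set ℓ : ℕ → ℝ := fun n => ∑ k ∈ Finset.Icc 1 n, (1:ℝ)/k with hℓdef
  set S : ℕ → ℝ := fun n => ∑ k ∈ Finset.Icc 1 n, s k / k with hSdef
  rw [Metric.tendsto_atTop]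
  intro ε hε
  set ε₄ : ℝ := ε/4 with hε₄def
  have hε₄ : 0 < ε₄ := by positivity
  obtain ⟨n₀, lam, hlam, hsd'⟩ := hsd ε₄ hε₄
  have hlam0 : 0 < lam := by linarith
  have hlam1 : 0 < lam - 1 := by linarith
  set C : ℝ := (8*lam+4)/(lam-1) with hCdef
  have hC0 : 0 < C := by positivity
  have hCl : C * (lam - 1) = 8*lam+4 := div_mul_cancel₀ _ (ne_of_gt hlam1)
  set δ : ℝ := ε₄ / C with hδdef
  have hδ0 : 0 < δ := by positivity
  have hδC : δ * C = ε₄ := div_mul_cancel₀ _ (ne_of_gt hC0)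
  obtain ⟨N₁, hN₁⟩ := (Metric.tendsto_atTop).mp hL1 δ hδ0
  -- the key consequence of hL1
  have hSt : ∀ n : ℕ, N₁ ≤ n → 1 ≤ n → |S n - ℓ n * A| ≤ δ * ℓ n := by
    intro n hn hn1
    have hd := hN₁ n hn
    rw [Real.dist_eq] at hd
    have hp : 0 < ℓ n := ell_pos hn1
    have heq : S n - ℓ n * A = ℓ n * ((ℓ n)⁻¹ * S n - A) := by
      field_simp
    rw [heq, abs_mul, abs_of_pos hp]
    exact le_of_lt (by nlinarith [abs_nonneg ((ℓ n)⁻¹ * S n - A)])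
  have hlog2pos : (0:ℝ) < Real.log 2 := Real.log_pos (by norm_num)
  have hlognn : ∀ n : ℕ, 1 ≤ n → 0 ≤ Real.log n := by
    intro n hn
    exact Real.log_nonneg (by exact_mod_cast hn)
  -- UPPER eventual bound
  have upper : ∀ᶠ n : ℕ in atTop, s n ≤ A + ε/2 := by
    have hpow : Tendsto (fun n : ℕ => (n:ℝ) ^ (lam - 1)) atTop atTop :=
      (tendsto_rpow_atTop hlam1).comp tendsto_natCast_atTop_atTop
    filter_upwards [eventually_ge_atTop (max (max n₀ N₁) 2),
        hpow.eventually_ge_atTop 2,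
        eventually_mul_log (a := 7*lam+3) (b := 2 + C*(1+Real.log 2)) (by linarith)]
        with n hn hpow2 hlogn
    have hn0 : n₀ ≤ n := le_trans (le_trans (le_max_left _ _) (le_max_left _ _)) hn
    have hnN₁ : N₁ ≤ n := le_trans (le_trans (le_max_right _ _) (le_max_left _ _)) hn
    have hn2 : 2 ≤ n := le_trans (le_max_right _ _) hn
    have hn1 : 1 ≤ n := le_trans (by norm_num) hn2
    have hnR : (2:ℝ) ≤ (n:ℝ) := by exact_mod_cast hn2
    have hnpos : (0:ℝ) < n := by linarith
    set L : ℝ := Real.log n with hLdef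
    have hL0 : 0 ≤ L := hlognn n hn1
    -- m := ⌊ n^lam ⌋
    set m : ℕ := ⌊(n:ℝ)^lam⌋₊ with hmdef
    have hrl : (n:ℝ)^lam = (n:ℝ) * (n:ℝ)^(lam-1) := by
      have h := Real.rpow_add hnpos 1 (lam-1)
      rw [Real.rpow_one] at h
      calc (n:ℝ)^lam = (n:ℝ)^(1+(lam-1)) := by congr 1; ring
        _ = _ := h
    have hrpow_big : 2*(n:ℝ) ≤ (n:ℝ)^lam := by
      rw [hrl]; nlinarith
    have hm_le : (m:ℝ) ≤ (n:ℝ)^lam := Nat.floor_le (Real.rpow_nonneg (le_of_lt hnpos) _)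
    have hm_gt : (n:ℝ)^lam - 1 < (m:ℝ) := Nat.sub_one_lt_floor _
    have hnm : n < m := by
      have : (n:ℝ) < (m:ℝ) := by linarith
      exact_mod_cast this
    have hm1 : 1 ≤ m := le_trans hn1 (le_of_lt hnm)
    have hmpos : (0:ℝ) < (m:ℝ) := by exact_mod_cast hm1
    -- slow decrease on Ioc n m
    have key : ∀ k ∈ Finset.Ioc n m, (s n - ε₄) * ((1:ℝ)/k) ≤ s k / k := by
      intro k hk
      rw [Finset.mem_Ioc] at hk
      have hks : (k:ℝ) ≤ (n:ℝ)^lam := le_trans (by exact_mod_cast hk.2) hm_le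
      have := hsd' n k hn0 hk.1 hks
      have hkpos : (0:ℝ) < (k:ℝ) := by
        have : 1 ≤ k := le_trans hn1 (le_of_lt hk.1)
        exact_mod_cast this
      rw [div_eq_mul_inv (s k), mul_one_div, div_eq_mul_inv]
      have : s n - ε₄ ≤ s k := by linarith
      exact mul_le_mul_of_nonneg_right this (by positivity)
    have hsum : (s n - ε₄) * (ℓ m - ℓ n) ≤ S m - S n := by
      have h1 := Finset.sum_le_sum key
      rw [← Finset.mul_sum] at h1
      rw [sum_split (le_of_lt hnm) (fun k => (1:ℝ)/k)] at h1
      rw [sum_split (le_of_lt hnm) (fun k => s k / k)] at h1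
      exact h1
    -- ℓ estimates
    have hlogm_up : Real.log m ≤ lam * L := by
      calc Real.log m ≤ Real.log ((n:ℝ)^lam) := Real.log_le_log hmpos hm_le
        _ = lam * L := Real.log_rpow hnpos lam
    have hpowl2 : (2:ℝ) ≤ (n:ℝ)^lam := by linarith
    have hlogm_lo : lam * L - Real.log 2 ≤ Real.log m := by
      have h2 : (n:ℝ)^lam / 2 ≤ (m:ℝ) := by linarith
      calc lam * L - Real.log 2 = Real.log ((n:ℝ)^lam / 2) := by
            rw [Real.log_div (by positivity) (by norm_num), Real.log_rpow hnpos]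
        _ ≤ Real.log m := Real.log_le_log (by positivity) h2
    have hℓm_lo : lam * L - Real.log 2 ≤ ℓ m := le_trans hlogm_lo (ell_lower m)
    have hℓm_up : ℓ m ≤ 1 + lam * L := le_trans (ell_upper m) (by linarith)
    have hℓn_up : ℓ n ≤ 1 + L := ell_upper n
    have hℓn_lo : L ≤ ℓ n := ell_lower n
    have hdiff : (lam - 1) * L - (1 + Real.log 2) ≤ ℓ m - ℓ n := by linarith
    -- positivity of ℓ m - ℓ n
    have hdiffpos : 0 < ℓ m - ℓ n := by
      rw [← sum_split (le_of_lt hnm) (fun k => (1:ℝ)/k)]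
      apply Finset.sum_pos
      · intro k hk
        rw [Finset.mem_Ioc] at hk
        have : 1 ≤ k := le_trans hn1 (le_of_lt hk.1)
        have : (0:ℝ) < k := by exact_mod_cast this
        positivity
      · exact ⟨m, Finset.mem_Ioc.mpr ⟨hnm, le_refl m⟩⟩
    -- ratio bound : ℓ m + ℓ n ≤ C * (ℓ m - ℓ n)
    have hratio : ℓ m + ℓ n ≤ C * (ℓ m - ℓ n) := by
      have step : C * ((lam - 1) * L - (1 + Real.log 2)) ≤ C * (ℓ m - ℓ n) :=
        mul_le_mul_of_nonneg_left hdiff (le_of_lt hC0)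
      have expand : C * ((lam - 1) * L - (1 + Real.log 2))
          = (8*lam+4) * L - C * (1 + Real.log 2) := by
        have : C * ((lam - 1) * L - (1 + Real.log 2))
            = (C * (lam - 1)) * L - C * (1 + Real.log 2) := by ring
        rw [this, hCl]
      rw [expand] at step
      linarith
    -- conclude
    have hSm := hSt m (le_trans hnN₁ (le_of_lt hnm)) hm1
    have hSn := hSt n hnN₁ hn1
    rw [abs_le] at hSm hSn
    have hfin : (s n - ε₄) * (ℓ m - ℓ n) ≤ A * (ℓ m - ℓ n) + ε₄ * (ℓ m - ℓ n) := by
      have h1 : S m - S n ≤ A * (ℓ m - ℓ n) + δ * (ℓ m + ℓ n) := by nlinarith [hSm.2, hSn.1]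
      have h2 : δ * (ℓ m + ℓ n) ≤ δ * (C * (ℓ m - ℓ n)) :=
        mul_le_mul_of_nonneg_left hratio (le_of_lt hδ0)
      have h3 : δ * (C * (ℓ m - ℓ n)) = ε₄ * (ℓ m - ℓ n) := by
        rw [← mul_assoc, hδC]
      linarith
    have : s n - ε₄ ≤ A + ε₄ := by
      by_contra hcon
      push_neg at hcon
      nlinarith
    rw [hε₄def] at this
    linarith
  -- LOWER eventual bound
  have lower : ∀ᶠ n : ℕ in atTop, A - ε/2 ≤ s n := by
    have hil : 0 < 1/lam := by positivity
    have hil1 : 1/lam < 1 := by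
      rw [div_lt_one hlam0]; linarith
    have hpow : Tendsto (fun n : ℕ => (n:ℝ) ^ (1 - 1/lam)) atTop atTop :=
      (tendsto_rpow_atTop (by linarith)).comp tendsto_natCast_atTop_atTop
    have hpow' : Tendsto (fun n : ℕ => (n:ℝ) ^ (1/lam)) atTop atTop :=
      (tendsto_rpow_atTop hil).comp tendsto_natCast_atTop_atTop
    filter_upwards [eventually_ge_atTop 1,
        hpow.eventually_ge_atTop 2,
        hpow'.eventually_ge_atTop ((max n₀ N₁ : ℕ) + 1),
        eventually_mul_log (a := 6*lam+4)
          (b := lam*(2 + Real.log 2) + lam*C*(1+Real.log 2)) (by linarith)]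
        with n hn1 hpow2 hpowbig hlogn
    have hnR1 : (1:ℝ) ≤ (n:ℝ) := by exact_mod_cast hn1
    have hnpos : (0:ℝ) < n := by linarith
    set L : ℝ := Real.log n with hLdef
    have hL0 : 0 ≤ L := hlognn n hn1
    set p : ℝ := (n:ℝ)^(1/lam) with hpdef
    have hp1 : (1:ℝ) ≤ p := Real.one_le_rpow hnR1 (le_of_lt hil)
    have hppos : (0:ℝ) < p := by linarith
    set m : ℕ := ⌈p⌉₊ with hmdef
    have hm_ge : p ≤ (m:ℝ) := Nat.le_ceil p
    have hm_lt : (m:ℝ) < p + 1 := Nat.ceil_lt_add_one (le_of_lt hppos)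
    have hm1 : 1 ≤ m := by
      have h : (1:ℝ) ≤ (m:ℝ) := le_trans hp1 hm_ge
      exact_mod_cast h
    have hmn₀ : (n₀:ℕ) ≤ m := by
      have h1 : ((max n₀ N₁ : ℕ) : ℝ) + 1 ≤ (m:ℝ) := le_trans hpowbig hm_ge
      have h2 : ((n₀:ℕ) : ℝ) ≤ ((max n₀ N₁ : ℕ) : ℝ) := by
        exact_mod_cast le_max_left n₀ N₁
      have : ((n₀:ℕ):ℝ) ≤ (m:ℝ) := by linarith
      exact_mod_cast this
    have hmN₁ : N₁ ≤ m := by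
      have h1 : ((max n₀ N₁ : ℕ) : ℝ) + 1 ≤ (m:ℝ) := le_trans hpowbig hm_ge
      have h2 : ((N₁:ℕ) : ℝ) ≤ ((max n₀ N₁ : ℕ) : ℝ) := by
        exact_mod_cast le_max_right n₀ N₁
      have : ((N₁:ℕ):ℝ) ≤ (m:ℝ) := by linarith
      exact_mod_cast this
    -- m < n
    have hrl : (n:ℝ) = p * (n:ℝ)^(1 - 1/lam) := by
      have h := Real.rpow_add hnpos (1/lam) (1 - 1/lam)
      have he : 1/lam + (1 - 1/lam) = 1 := by ring
      rw [he, Real.rpow_one] at h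
      exact h
    have hmn : m < n := by
      have : (m:ℝ) < (n:ℝ) := by nlinarith
      exact_mod_cast this
    -- slow decrease on Ioc m n
    have key : ∀ k ∈ Finset.Ioc m n, s k / k ≤ (s n + ε₄) * ((1:ℝ)/k) := by
      intro k hk
      rw [Finset.mem_Ioc] at hk
      have hk1 : 1 ≤ k := le_trans hm1 (le_of_lt hk.1)
      have hkpos : (0:ℝ) < (k:ℝ) := by exact_mod_cast hk1
      have hsk : s k ≤ s n + ε₄ := by
        rcases eq_or_lt_of_le hk.2 with heq | hlt
        · subst heq; linarith
        · have hkn₀ : n₀ ≤ k := le_trans hmn₀ (le_of_lt hk.1)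
          have hkp : p ≤ (k:ℝ) := by
            have : (m:ℝ) ≤ (k:ℝ) := by exact_mod_cast le_of_lt hk.1
            linarith
          have hnk : (n:ℝ) ≤ (k:ℝ)^lam := by
            have h1 : p^lam ≤ (k:ℝ)^lam :=
              Real.rpow_le_rpow (le_of_lt hppos) hkp (le_of_lt hlam0)
            have h2 : p^lam = (n:ℝ) := by
              rw [hpdef, ← Real.rpow_mul (le_of_lt hnpos),
                one_div_mul_cancel (ne_of_gt hlam0), Real.rpow_one]
            linarith
          have := hsd' k n hkn₀ hlt hnk
          linarith
      rw [div_eq_mul_inv (s k), mul_one_div, div_eq_mul_inv]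
      exact mul_le_mul_of_nonneg_right hsk (by positivity)
    have hsum : S n - S m ≤ (s n + ε₄) * (ℓ n - ℓ m) := by
      have h1 := Finset.sum_le_sum key
      rw [← Finset.mul_sum] at h1
      rw [sum_split (le_of_lt hmn) (fun k => (1:ℝ)/k)] at h1
      rw [sum_split (le_of_lt hmn) (fun k => s k / k)] at h1
      exact h1
    -- ℓ estimates
    have hmpos : (0:ℝ) < (m:ℝ) := by exact_mod_cast hm1
    have hlogm_up : Real.log m ≤ Real.log 2 + (1/lam) * L := by
      have h2 : (m:ℝ) ≤ 2 * p := by linarith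
      calc Real.log m ≤ Real.log (2 * p) := Real.log_le_log hmpos h2
        _ = Real.log 2 + (1/lam) * L := by
            rw [Real.log_mul (by norm_num) (ne_of_gt hppos), hpdef,
              Real.log_rpow hnpos]
    have hℓm_up : ℓ m ≤ 1 + Real.log 2 + (1/lam) * L :=
      le_trans (ell_upper m) (by linarith)
    have hℓn_up : ℓ n ≤ 1 + L := ell_upper n
    have hℓn_lo : L ≤ ℓ n := ell_lower n
    have hℓm_lo : (0:ℝ) ≤ ℓ m := le_of_lt (ell_pos hm1)
    have hdiff : (1 - 1/lam) * L - (1 + Real.log 2) ≤ ℓ n - ℓ m := by linarith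
    have hdiffpos : 0 < ℓ n - ℓ m := by
      rw [← sum_split (le_of_lt hmn) (fun k => (1:ℝ)/k)]
      apply Finset.sum_pos
      · intro k hk
        rw [Finset.mem_Ioc] at hk
        have : 1 ≤ k := le_trans hm1 (le_of_lt hk.1)
        have : (0:ℝ) < k := by exact_mod_cast this
        positivity
      · exact ⟨n, Finset.mem_Ioc.mpr ⟨hmn, le_refl n⟩⟩
    -- ratio bound
    have hratio : ℓ n + ℓ m ≤ C * (ℓ n - ℓ m) := by
      have step : C * ((1 - 1/lam) * L - (1 + Real.log 2)) ≤ C * (ℓ n - ℓ m) :=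
        mul_le_mul_of_nonneg_left hdiff (le_of_lt hC0)
      -- multiply target inequality by lam
      have hmulL : (1/lam) * L * lam = L := by
        field_simp
      have expand : lam * (C * ((1 - 1/lam) * L - (1 + Real.log 2)))
          = (8*lam+4) * L - lam * C * (1+Real.log 2) := by
        have h1 : lam * (1 - 1/lam) = lam - 1 := by
          field_simp
        have : lam * (C * ((1 - 1/lam) * L - (1 + Real.log 2)))
            = C * (lam * (1 - 1/lam)) * L - lam * C * (1+Real.log 2) := by ring
        rw [this, h1, mul_comm C (lam-1), mul_comm (lam-1) C, hCl]
      have hμL : (1/lam) * L ≤ L := by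
        apply mul_le_of_le_one_left hL0
        linarith
      have hsumup : ℓ n + ℓ m ≤ 2 + Real.log 2 + 2 * L := by linarith
      have hmain : lam * (ℓ n + ℓ m) ≤ lam * (C * ((1 - 1/lam) * L - (1 + Real.log 2))) := by
        rw [expand]
        nlinarith
      have := (mul_le_mul_iff_of_pos_left hlam0).mp hmain
      linarith
    -- conclude
    have hSm := hSt m hmN₁ hm1
    have hSn := hSt n (le_trans hmN₁ (le_of_lt hmn)) hn1
    rw [abs_le] at hSm hSn
    have hfin : A * (ℓ n - ℓ m) - ε₄ * (ℓ n - ℓ m) ≤ (s n + ε₄) * (ℓ n - ℓ m) := by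
      have h1 : A * (ℓ n - ℓ m) - δ * (ℓ n + ℓ m) ≤ S n - S m := by nlinarith [hSm.2, hSn.1]
      have h2 : δ * (ℓ n + ℓ m) ≤ δ * (C * (ℓ n - ℓ m)) :=
        mul_le_mul_of_nonneg_left hratio (le_of_lt hδ0)
      have h3 : δ * (C * (ℓ n - ℓ m)) = ε₄ * (ℓ n - ℓ m) := by
        rw [← mul_assoc, hδC]
      linarith
    have : A - ε₄ ≤ s n + ε₄ := by
      by_contra hcon
      push_neg at hcon
      nlinarith
    rw [hε₄def] at this
    linarith
  -- combine
  obtain ⟨N, hN⟩ := eventually_atTop.mp (upper.and lower)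
  refine ⟨N, fun n hn => ?_⟩
  obtain ⟨h1, h2⟩ := hN n hn
  rw [Real.dist_eq, abs_lt]
  constructor <;> linarith
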